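/- For an odd prime p, a field F_q with q = p^n, and an integer k with 2 ≤ k ≤ p−1, the space V_{k+(q-1)} decomposes as a direct sum of F_q-vector spaces: V_{k+(q-1)} = D(V_k) ⊕ θ_q·V_{k-2} ⊕ W, where W is spanned by the monomials X^r Y^{k+q-1-r} for k ≤ r ≤ q−1. -/

import Mathlib

open MvPolynomial

/-- The Serre operator `D f = X^q ∂f/∂X + Y^q ∂f/∂Y` as a linear map. -/
noncomputable def serreDLin (F : Type*) [CommRing F] (q : ℕ) :
    MvPolynomial (Fin 2) F →ₗ[F] MvPolynomial (Fin 2) F :=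
  (LinearMap.mulLeft F (X 0 ^ q)) ∘ₗ (pderiv 0).toLinearMap +
    (LinearMap.mulLeft F (X 1 ^ q)) ∘ₗ (pderiv 1).toLinearMap

namespace VkqAux

variable {F : Type*} [CommRing F]

/-- The exponent vector `(a, b)` as a `Fin 2 →₀ ℕ`. -/
noncomputable def fd (a b : ℕ) : Fin 2 →₀ ℕ := Finsupp.single 0 a + Finsupp.single 1 b

@[simp] lemma fd_apply_zero (a b : ℕ) : fd a b 0 = a := by
  simp [fd, Finsupp.single_apply]

@[simp] lemma fd_apply_one (a b : ℕ) : fd a b 1 = b := by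
  simp [fd, Finsupp.single_apply]

lemma fd_degree (a b : ℕ) : (fd a b).degree = a + b := by
  have : ∀ x : Fin 2 →₀ ℕ, x.degree = x 0 + x 1 := by
    intro x
    have h2 : x.degree = ∑ i : Fin 2, x i :=
      Finset.sum_subset (Finset.subset_univ _)
        (by intro i _ hi; simpa using Finsupp.notMem_support_iff.mp hi)
    rw [h2, Fin.sum_univ_two]
  rw [this]; simp

/-- The monomial `X^a Y^b`. -/
noncomputable def M (a b : ℕ) : MvPolynomial (Fin 2) F := monomial (fd a b) 1

lemma fd_add (a b c d : ℕ) : fd a b + fd c d = fd (a+c) (b+d) := by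
  ext x; fin_cases x <;> simp

lemma X_pow_mul_eq_M (a b : ℕ) : (X 0 ^ a * X 1 ^ b : MvPolynomial (Fin 2) F) = M a b := by
  rw [X_pow_eq_monomial, X_pow_eq_monomial, monomial_mul, one_mul]; rfl

lemma M_mem_hom (a b : ℕ) :
    (M a b : MvPolynomial (Fin 2) F) ∈ homogeneousSubmodule (Fin 2) F (a + b) := by
  rw [mem_homogeneousSubmodule]
  exact isHomogeneous_monomial _ (fd_degree a b)

lemma M_mul (a b c d : ℕ) : (M a b : MvPolynomial (Fin 2) F) * M c d = M (a+c) (b+d) := by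
  rw [M, M, M, monomial_mul, one_mul, fd_add]

lemma serreD_M (q a b : ℕ) :
    serreDLin F q (M a b) = (a : F) • M (a + q - 1) b + (b : F) • M a (b + q - 1) := by
  rw [serreDLin]
  simp only [LinearMap.add_apply, LinearMap.coe_comp, Function.comp_apply,
    Derivation.coeFn_coe, LinearMap.mulLeft_apply]
  congr 1
  · rw [M, pderiv_monomial, fd_apply_zero, one_mul]
    rcases Nat.eq_zero_or_pos a with h | h
    · subst h; simp
    · have h1 : fd a b - Finsupp.single 0 1 = fd (a-1) b := by
        ext x; fin_cases x <;> simp [fd, Finsupp.single_apply] <;> omega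
      have h2 : Finsupp.single (0 : Fin 2) q + fd (a-1) b = fd (a+q-1) b := by
        ext x; fin_cases x <;> simp [fd, Finsupp.single_apply] <;> omega
      rw [h1, X_pow_eq_monomial, monomial_mul, h2, one_mul, M, smul_monomial, smul_eq_mul, mul_one]
  · rw [M, pderiv_monomial, fd_apply_one, one_mul]
    rcases Nat.eq_zero_or_pos b with h | h
    · subst h; simp
    · have h1 : fd a b - Finsupp.single 1 1 = fd a (b-1) := by
        ext x; fin_cases x <;> simp [fd, Finsupp.single_apply] <;> omega
      have h2 : Finsupp.single (1 : Fin 2) q + fd a (b-1) = fd a (b+q-1) := by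
        ext x; fin_cases x <;> simp [fd, Finsupp.single_apply] <;> omega
      rw [h1, X_pow_eq_monomial, monomial_mul, h2, one_mul, M, smul_monomial, smul_eq_mul, mul_one]

lemma theta_M (q a b : ℕ) :
    ((X 0 ^ q * X 1 - X 0 * X 1 ^ q : MvPolynomial (Fin 2) F)) * M a b
      = M (a+q) (b+1) - M (a+1) (b+q) := by
  have h1 : (X 0 ^ q * X 1 : MvPolynomial (Fin 2) F) = M q 1 := by
    rw [← pow_one (X 1 : MvPolynomial (Fin 2) F)]
    rw [X_pow_eq_monomial, X_pow_eq_monomial, monomial_mul, one_mul]; rfl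
  have h2 : (X 0 * X 1 ^ q : MvPolynomial (Fin 2) F) = M 1 q := by
    rw [← pow_one (X 0 : MvPolynomial (Fin 2) F)]
    rw [X_pow_eq_monomial, X_pow_eq_monomial, monomial_mul, one_mul]; rfl
  rw [sub_mul, h1, h2, M_mul, M_mul, Nat.add_comm q a, Nat.add_comm 1 b, Nat.add_comm 1 a,
    Nat.add_comm q b]

lemma hom_span (d : ℕ) :
    homogeneousSubmodule (Fin 2) F d
      = Submodule.span F
          (Set.range fun i : Fin (d+1) => (M (i : ℕ) (d - i) : MvPolynomial (Fin 2) F)) := by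
  apply le_antisymm
  · intro f hf
    rw [mem_homogeneousSubmodule] at hf
    rw [f.as_sum]
    apply Submodule.sum_mem
    intro v hv
    have hdeg : v.degree = d := by
      have h := hf (mem_support_iff.mp hv)
      rwa [Finsupp.degree_eq_weight_one]
    have hvv : v = fd (v 0) (v 1) := by ext x; fin_cases x <;> simp
    have h01 : v 0 + v 1 = d := by rw [hvv, fd_degree] at hdeg; exact hdeg
    have hle : v 0 < d + 1 := by omega
    have heq : (monomial v (coeff v f) : MvPolynomial (Fin 2) F) = coeff v f • M (v 0) (v 1) := by
      rw [M, smul_monomial, smul_eq_mul, mul_one, ← hvv]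
    rw [heq]
    apply Submodule.smul_mem
    apply Submodule.subset_span
    refine ⟨⟨v 0, hle⟩, ?_⟩
    simp only
    congr 1
    omega
  · rw [Submodule.span_le]
    rintro _ ⟨i, rfl⟩
    have h := M_mem_hom (F := F) (i : ℕ) (d - i)
    have hi : (i : ℕ) + (d - (i : ℕ)) = d := by have := i.isLt; omega
    rwa [hi] at h

lemma li_M [Nontrivial F] (d : ℕ) :
    LinearIndependent F (fun i : Fin (d+1) => (M (i : ℕ) (d - i) : MvPolynomial (Fin 2) F)) := by
  have h : (fun i : Fin (d+1) => (M (i : ℕ) (d - i) : MvPolynomial (Fin 2) F))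
      = (basisMonomials (Fin 2) F) ∘ (fun i : Fin (d+1) => fd (i : ℕ) (d - i)) := by
    funext i
    simp [coe_basisMonomials, M]
  rw [h]
  apply (basisMonomials (Fin 2) F).linearIndependent.comp
  intro i j hij
  have : (i : ℕ) = (j : ℕ) := by
    have := DFunLike.congr_fun hij (0 : Fin 2); simpa using this
  exact Fin.ext this

end VkqAux

open VkqAux

set_option maxHeartbeats 1000000

/-- For `p` an odd prime, `q = p^n`, and `2 ≤ k ≤ p − 1`, one has the direct sum
decomposition of `F_q`-vector spaces
`V_{k+(q-1)} = D(V_k) ⊕ θ_q·V_{k-2} ⊕ W`, where `W` is spanned by the monomials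
`X^r Y^{k+q-1-r}` for `k ≤ r ≤ q − 1`. -/
theorem Vkq_direct_sum_decomposition (F : Type*) [Field F] [Fintype F]
    (p n : ℕ) (hp : p.Prime) (hodd : Odd p) [CharP F p]
    (hq : Fintype.card F = p ^ n) (hn : 0 < n)
    (k : ℕ) (hk2 : 2 ≤ k) (hkp : k ≤ p - 1) :
    (Submodule.map (serreDLin F (Fintype.card F)) (homogeneousSubmodule (Fin 2) F k)) ⊓
        (Submodule.map
          (LinearMap.mulLeft F (X 0 ^ Fintype.card F * X 1 - X 0 * X 1 ^ Fintype.card F))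
          (homogeneousSubmodule (Fin 2) F (k - 2))) = ⊥ ∧
    ((Submodule.map (serreDLin F (Fintype.card F)) (homogeneousSubmodule (Fin 2) F k)) ⊔
        (Submodule.map
          (LinearMap.mulLeft F (X 0 ^ Fintype.card F * X 1 - X 0 * X 1 ^ Fintype.card F))
          (homogeneousSubmodule (Fin 2) F (k - 2)))) ⊓
      (Submodule.span F
        {m : MvPolynomial (Fin 2) F | ∃ r : ℕ, k ≤ r ∧ r ≤ Fintype.card F - 1 ∧
          m = X 0 ^ r * X 1 ^ (k + Fintype.card F - 1 - r)}) = ⊥ ∧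
    (Submodule.map (serreDLin F (Fintype.card F)) (homogeneousSubmodule (Fin 2) F k)) ⊔
      (Submodule.map
        (LinearMap.mulLeft F (X 0 ^ Fintype.card F * X 1 - X 0 * X 1 ^ Fintype.card F))
        (homogeneousSubmodule (Fin 2) F (k - 2))) ⊔
      (Submodule.span F
        {m : MvPolynomial (Fin 2) F | ∃ r : ℕ, k ≤ r ∧ r ≤ Fintype.card F - 1 ∧
          m = X 0 ^ r * X 1 ^ (k + Fintype.card F - 1 - r)}) =
      homogeneousSubmodule (Fin 2) F (k + Fintype.card F - 1) := by
  classical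
  set q := Fintype.card F with hqdef
  -- numerics
  have hp3 : 3 ≤ p := by
    have h2 := hp.two_le
    have : p ≠ 2 := by
      rintro rfl
      exact (Nat.not_odd_iff_even.mpr (by decide)) hodd
    omega
  have hpq : p ≤ q := by
    rw [hq]
    calc p = p ^ 1 := (pow_one p).symm
    _ ≤ p ^ n := Nat.pow_le_pow_right (by omega) hn
  have hkq : k < q := by omega
  have hkF : (k : F) ≠ 0 := by
    intro h
    rw [CharP.cast_eq_zero_iff F p k] at h
    have := Nat.le_of_dvd (by omega) h
    omega
  set A := Submodule.map (serreDLin F q) (homogeneousSubmodule (Fin 2) F k) with hAdef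
  set B := Submodule.map
      (LinearMap.mulLeft F (X 0 ^ q * X 1 - X 0 * X 1 ^ q : MvPolynomial (Fin 2) F))
      (homogeneousSubmodule (Fin 2) F (k - 2)) with hBdef
  set C := Submodule.span F
      {m : MvPolynomial (Fin 2) F | ∃ r : ℕ, k ≤ r ∧ r ≤ q - 1 ∧
        m = X 0 ^ r * X 1 ^ (k + q - 1 - r)} with hCdef
  -- span descriptions
  have hA : A = Submodule.span F
      (Set.range fun a : Fin (k+1) => serreDLin F q (M ((a : ℕ)) (k - (a : ℕ)))) := by
    rw [hAdef, hom_span k, Submodule.map_span, ← Set.range_comp]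
    rfl
  have hB : B = Submodule.span F
      (Set.range fun a : Fin (k-2+1) =>
        ((X 0 ^ q * X 1 - X 0 * X 1 ^ q : MvPolynomial (Fin 2) F))
          * M ((a : ℕ)) (k - 2 - (a : ℕ))) := by
    rw [hBdef, hom_span (k-2), Submodule.map_span, ← Set.range_comp]
    rfl
  have hCset : {m : MvPolynomial (Fin 2) F | ∃ r : ℕ, k ≤ r ∧ r ≤ q - 1 ∧
        m = X 0 ^ r * X 1 ^ (k + q - 1 - r)}
      = Set.range fun i : Fin (q - k) =>
          (M (k + (i : ℕ)) (k + q - 1 - (k + (i : ℕ))) : MvPolynomial (Fin 2) F) := by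
    ext x
    constructor
    · rintro ⟨r, h1, h2, rfl⟩
      refine ⟨⟨r - k, by omega⟩, ?_⟩
      show (M (k + (r - k)) (k + q - 1 - (k + (r - k))) : MvPolynomial (Fin 2) F) = _
      have hr : k + (r - k) = r := by omega
      rw [hr, ← X_pow_mul_eq_M]
    · rintro ⟨i, rfl⟩
      have hi : (i : ℕ) < q - k := i.isLt
      exact ⟨k + (i : ℕ), by omega, by omega, (X_pow_mul_eq_M _ _).symm⟩
  -- membership helpers
  have hA' : A ≤ A ⊔ B ⊔ C := le_sup_of_le_left le_sup_left
  have hB' : B ≤ A ⊔ B ⊔ C := le_sup_of_le_left le_sup_right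
  have hC' : C ≤ A ⊔ B ⊔ C := le_sup_right
  have memA : ∀ a : ℕ, a ≤ k → serreDLin F q (M a (k - a)) ∈ A := by
    intro a ha
    rw [hA]
    exact Submodule.subset_span ⟨⟨a, by omega⟩, rfl⟩
  have memB : ∀ a : ℕ, a ≤ k - 2 →
      ((X 0 ^ q * X 1 - X 0 * X 1 ^ q : MvPolynomial (Fin 2) F)) * M a (k - 2 - a) ∈ B := by
    intro a ha
    rw [hB]
    exact Submodule.subset_span ⟨⟨a, by omega⟩, rfl⟩
  have memC : ∀ r : ℕ, k ≤ r → r ≤ q - 1 →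
      (M r (k + q - 1 - r) : MvPolynomial (Fin 2) F) ∈ C := by
    intro r h1 h2
    rw [hCdef]
    exact Submodule.subset_span ⟨r, h1, h2, (X_pow_mul_eq_M _ _).symm⟩
  -- the key double membership
  have key : ∀ a : ℕ, 1 ≤ a → a ≤ k - 1 →
      (M (a + q - 1) (k - a) : MvPolynomial (Fin 2) F) ∈ A ⊔ B ⊔ C ∧
      (M a (k + q - 1 - a) : MvPolynomial (Fin 2) F) ∈ A ⊔ B ⊔ C := by
    intro a h1 h2
    have hwmem := memA a (by omega)
    rw [serreD_M] at hwmem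
    have e1 : k - a + q - 1 = k + q - 1 - a := by omega
    rw [e1] at hwmem
    have htmem := memB (a - 1) (by omega)
    rw [theta_M] at htmem
    have e2 : a - 1 + q = a + q - 1 := by omega
    have e3 : k - 2 - (a - 1) + 1 = k - a := by omega
    have e4 : a - 1 + 1 = a := by omega
    have e5 : k - 2 - (a - 1) + q = k + q - 1 - a := by omega
    rw [e2, e3, e4, e5] at htmem
    set u := (M (a + q - 1) (k - a) : MvPolynomial (Fin 2) F) with hu
    set v := (M a (k + q - 1 - a) : MvPolynomial (Fin 2) F) with hv
    have hcast : ((k - a : ℕ) : F) = (k : F) - (a : F) := by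
      rw [Nat.cast_sub (by omega)]
    rw [hcast] at hwmem
    have h₁ : (a : F) • u + ((k : F) - (a : F)) • v ∈ A ⊔ B ⊔ C := hA' hwmem
    have h₂ : u - v ∈ A ⊔ B ⊔ C := hB' htmem
    constructor
    · have hku : (k : F) • u
          = ((a : F) • u + ((k : F) - (a : F)) • v) + ((k : F) - (a : F)) • (u - v) := by
        module
      have hm : (k : F) • u ∈ A ⊔ B ⊔ C := by
        rw [hku]; exact Submodule.add_mem _ h₁ (Submodule.smul_mem _ _ h₂)
      have := Submodule.smul_mem _ ((k : F)⁻¹) hm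
      rwa [inv_smul_smul₀ hkF] at this
    · have hkv : (k : F) • v
          = ((a : F) • u + ((k : F) - (a : F)) • v) - (a : F) • (u - v) := by
        module
      have hm : (k : F) • v ∈ A ⊔ B ⊔ C := by
        rw [hkv]; exact Submodule.sub_mem _ h₁ (Submodule.smul_mem _ _ h₂)
      have := Submodule.smul_mem _ ((k : F)⁻¹) hm
      rwa [inv_smul_smul₀ hkF] at this
  -- spanning
  have hspan : homogeneousSubmodule (Fin 2) F (k + q - 1) ≤ A ⊔ B ⊔ C := by
    rw [hom_span (k + q - 1)]
    rw [Submodule.span_le]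
    rintro _ ⟨r0, rfl⟩
    simp only
    have hr : (r0 : ℕ) ≤ k + q - 1 := by have := r0.isLt; omega
    set r := (r0 : ℕ) with hrdef
    rcases lt_or_ge r k with hrk | hrk
    · rcases Nat.eq_zero_or_pos r with h0 | hr1
      · rw [h0]
        have hmem := memA 0 (by omega)
        rw [serreD_M] at hmem
        simp only [Nat.cast_zero, zero_smul, zero_add, Nat.sub_zero] at hmem ⊢
        have hm : ((k : F)) • (M 0 (k + q - 1) : MvPolynomial (Fin 2) F) ∈ A ⊔ B ⊔ C :=
          hA' hmem
        have := Submodule.smul_mem _ ((k : F)⁻¹) hm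
        rwa [inv_smul_smul₀ hkF] at this
      · exact (key r hr1 (by omega)).2
    · rcases le_or_gt r (q - 1) with hrq | hrq
      · exact hC' (memC r hrk hrq)
      · by_cases hrm : r = k + q - 1
        · have hmem := memA k le_rfl
          rw [serreD_M] at hmem
          simp only [Nat.sub_self, Nat.cast_zero, zero_smul, add_zero] at hmem
          have hm : ((k : F)) • (M (k + q - 1) 0 : MvPolynomial (Fin 2) F) ∈ A ⊔ B ⊔ C :=
            hA' hmem
          have hmm := Submodule.smul_mem _ ((k : F)⁻¹) hm
          rw [inv_smul_smul₀ hkF] at hmm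
          rw [hrm, Nat.sub_self]
          exact hmm
        · have ha1 : 1 ≤ r - q + 1 := by omega
          have ha2 : r - q + 1 ≤ k - 1 := by omega
          have h := (key (r - q + 1) ha1 ha2).1
          have e1 : r - q + 1 + q - 1 = r := by omega
          have e2 : k - (r - q + 1) = k + q - 1 - r := by omega
          rwa [e1, e2] at h
  -- upper bounds: everything is homogeneous of degree k + q - 1
  have hAle : A ≤ homogeneousSubmodule (Fin 2) F (k + q - 1) := by
    rw [hA, Submodule.span_le]
    rintro _ ⟨a0, rfl⟩
    simp only
    have ha : (a0 : ℕ) ≤ k := by have := a0.isLt; omega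
    rw [serreD_M]
    apply Submodule.add_mem
    · apply Submodule.smul_mem
      have h := M_mem_hom (F := F) ((a0 : ℕ) + q - 1) (k - (a0 : ℕ))
      rwa [show (a0 : ℕ) + q - 1 + (k - (a0 : ℕ)) = k + q - 1 by omega] at h
    · apply Submodule.smul_mem
      have h := M_mem_hom (F := F) (a0 : ℕ) (k - (a0 : ℕ) + q - 1)
      rwa [show (a0 : ℕ) + (k - (a0 : ℕ) + q - 1) = k + q - 1 by omega] at h
  have hBle : B ≤ homogeneousSubmodule (Fin 2) F (k + q - 1) := by
    rw [hB, Submodule.span_le]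
    rintro _ ⟨a0, rfl⟩
    simp only
    have ha : (a0 : ℕ) ≤ k - 2 := by have := a0.isLt; omega
    rw [theta_M]
    apply Submodule.sub_mem
    · have h := M_mem_hom (F := F) ((a0 : ℕ) + q) (k - 2 - (a0 : ℕ) + 1)
      rwa [show (a0 : ℕ) + q + (k - 2 - (a0 : ℕ) + 1) = k + q - 1 by omega] at h
    · have h := M_mem_hom (F := F) ((a0 : ℕ) + 1) (k - 2 - (a0 : ℕ) + q)
      rwa [show (a0 : ℕ) + 1 + (k - 2 - (a0 : ℕ) + q) = k + q - 1 by omega] at h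
  have hCle : C ≤ homogeneousSubmodule (Fin 2) F (k + q - 1) := by
    rw [hCdef, Submodule.span_le]
    rintro _ ⟨r, h1, h2, rfl⟩
    rw [X_pow_mul_eq_M]
    have h := M_mem_hom (F := F) r (k + q - 1 - r)
    rwa [show r + (k + q - 1 - r) = k + q - 1 by omega] at h
  have htop : A ⊔ B ⊔ C = homogeneousSubmodule (Fin 2) F (k + q - 1) :=
    le_antisymm (sup_le (sup_le hAle hBle) hCle) hspan
  -- finite dimensionality
  haveI iA : FiniteDimensional F A := by
    rw [hA]; exact FiniteDimensional.span_of_finite F (Set.finite_range _)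
  haveI iB : FiniteDimensional F B := by
    rw [hB]; exact FiniteDimensional.span_of_finite F (Set.finite_range _)
  haveI iC : FiniteDimensional F C := by
    rw [hCdef, hCset]; exact FiniteDimensional.span_of_finite F (Set.finite_range _)
  -- finrank computations
  have hrTop : Module.finrank F ↥(A ⊔ B ⊔ C) = k + q := by
    rw [htop, hom_span (k + q - 1), finrank_span_eq_card (li_M (k + q - 1)),
      Fintype.card_fin]
    omega
  have hrA : Module.finrank F A ≤ k + 1 := by
    rw [hA]
    have h := finrank_range_le_card (R := F)
      (fun a : Fin (k+1) => serreDLin F q (M ((a : ℕ)) (k - (a : ℕ))))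
    simpa [Set.finrank, Fintype.card_fin] using h
  have hrB : Module.finrank F B ≤ k - 1 := by
    rw [hB]
    have h := finrank_range_le_card (R := F)
      (fun a : Fin (k-2+1) =>
        ((X 0 ^ q * X 1 - X 0 * X 1 ^ q : MvPolynomial (Fin 2) F))
          * M ((a : ℕ)) (k - 2 - (a : ℕ)))
    simp only [Set.finrank, Fintype.card_fin] at h
    omega
  have hrC : Module.finrank F C ≤ q - k := by
    rw [hCdef, hCset]
    have h := finrank_range_le_card (R := F)
      (fun i : Fin (q - k) =>
        (M (k + (i : ℕ)) (k + q - 1 - (k + (i : ℕ))) : MvPolynomial (Fin 2) F))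
    simpa [Set.finrank, Fintype.card_fin] using h
  haveI iAB : FiniteDimensional F ↥(A ⊔ B) := Submodule.finiteDimensional_sup A B
  have e1 := Submodule.finrank_sup_add_finrank_inf_eq A B
  have e2 := Submodule.finrank_sup_add_finrank_inf_eq (A ⊔ B) C
  rw [hrTop] at e2
  have hABinf : Module.finrank F ↥(A ⊓ B) = 0 := by omega
  have hABCinf : Module.finrank F ↥((A ⊔ B) ⊓ C) = 0 := by omega
  haveI : FiniteDimensional F ↥(A ⊓ B) :=
    Submodule.finiteDimensional_of_le (inf_le_left : A ⊓ B ≤ A)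
  haveI : FiniteDimensional F ↥((A ⊔ B) ⊓ C) :=
    Submodule.finiteDimensional_of_le (inf_le_right : (A ⊔ B) ⊓ C ≤ C)
  exact ⟨Submodule.finrank_eq_zero.mp hABinf, Submodule.finrank_eq_zero.mp hABCinf, htop⟩
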